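/- arXiv:1010.4665 — 2 statements merged into one kernel-verified Lean document; each statement's English description precedes it below -/
import Mathlib

section
/- Let D ⊆ ℂ be a domain, E ⊆ D, α an ordinal number, and z₀ ∈ E_D^(α). Then z₀ ∈ E_A^(α) for every open set A ⊆ D with z₀ ∈ A. -/
open Filter Set Metric

/-- Iterated (transfinite) derived set of `E` with respect to `A`:
`E_A^(0) = E`, `E_A^(α+1) = (E_A^(α))' ∩ A`, and at limit stages the
intersection over `1 ≤ β < α`. -/
noncomputable def derivIter (A : Set ℂ) (E : Set ℂ) (o : Ordinal) : Set ℂ :=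
  Ordinal.limitRecOn o E
    (fun _ ih => {z | z ∈ A ∧ AccPt z (Filter.principal ih)})
    (fun o _ ih => ⋂ (β : Ordinal) (h : β < o) (_ : 1 ≤ β), ih β h)

lemma derivIter_zero (A E : Set ℂ) : derivIter A E 0 = E :=
  Ordinal.limitRecOn_zero ..

lemma derivIter_succ (A E : Set ℂ) (o : Ordinal) :
    derivIter A E (Order.succ o)
      = {z | z ∈ A ∧ AccPt z (Filter.principal (derivIter A E o))} :=
  Ordinal.limitRecOn_succ ..

lemma derivIter_limit (A E : Set ℂ) {o : Ordinal} (ho : Order.IsSuccLimit o) :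
    derivIter A E o = ⋂ (β : Ordinal) (_ : β < o) (_ : 1 ≤ β), derivIter A E β :=
  Ordinal.limitRecOn_limit _ _ _ _ ho

lemma derivIter_localize (D E A : Set ℂ) (hA : IsOpen A) (o : Ordinal) :
    ∀ z ∈ A, z ∈ derivIter D E o → z ∈ derivIter A E o := by
  induction o using Ordinal.limitRecOn with
  | zero => simp [derivIter_zero]
  | add_one o ih =>
    intro z hzA hz
    rw [← Order.succ_eq_add_one, derivIter_succ] at hz ⊢
    refine ⟨hzA, ?_⟩
    have h1 : AccPt z (Filter.principal (A ∩ derivIter D E o)) :=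
      hz.2.nhds_inter (hA.mem_nhds hzA)
    exact h1.mono (principal_mono.mpr fun w hw => ih w hw.1 hw.2)
  | limit o ho ih =>
    intro z hzA hz
    rw [derivIter_limit _ _ ho] at hz ⊢
    simp only [mem_iInter] at hz ⊢
    intro β hβ h1β
    exact ih β hβ z hzA (hz β hβ h1β)

theorem stmt_7 (D : Set ℂ) (hD : IsOpen D) (hDc : IsConnected D) (E : Set ℂ) (hE : E ⊆ D)
    (α : Ordinal) (z₀ : ℂ) (hz₀ : z₀ ∈ derivIter D E α)
    (A : Set ℂ) (hA : IsOpen A) (hAD : A ⊆ D) (hzA : z₀ ∈ A) :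
    z₀ ∈ derivIter A E α :=
  derivIter_localize D E A hA α z₀ hzA hz₀
end

section
/- Let (aₙ) be an increasing sequence of positive reals satisfying a_{n+2} ≥ a_{n+1}·aₙ for all n ≥ 1, with a₁ > 1 and a₂ > 1. Then (aₙ/a_{n−1})^{1/n} → ∞ as n → ∞, and for all sufficiently large n, aₙ ≥ 1/(1 − (1 − 2^{−(n+1)})^{1/(n+1)}). -/
open Filter Real

-- 2^m ≥ m^2 for m ≥ 4
lemma aux_sq_le_two_pow : ∀ m : ℕ, 4 ≤ m → m ^ 2 ≤ 2 ^ m := by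
  intro m hm
  induction m, hm using Nat.le_induction with
  | base => norm_num
  | succ m hm ih =>
      have h2 : 2 * m ^ 2 ≤ 2 * 2 ^ m := by omega
      have : (m + 1) ^ 2 ≤ 2 * m ^ 2 := by nlinarith
      calc (m + 1) ^ 2 ≤ 2 * m ^ 2 := this
        _ ≤ 2 * 2 ^ m := h2
        _ = 2 ^ (m + 1) := by ring

theorem stmt_17 (a : ℕ → ℝ) (hpos : ∀ n, 1 ≤ n → 0 < a n)
    (hmono : ∀ n, 1 ≤ n → a n < a (n + 1))
    (h1 : 1 < a 1) (h2 : 1 < a 2)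
    (hrec : ∀ n, 1 ≤ n → a (n + 1) * a n ≤ a (n + 2)) :
    Filter.Tendsto (fun n : ℕ => (a n / a (n - 1)) ^ ((1 : ℝ) / n)) Filter.atTop Filter.atTop ∧
    ∃ N : ℕ, ∀ n ≥ N,
      1 / (1 - (1 - (2 : ℝ) ^ (-(n + 1 : ℤ))) ^ ((1 : ℝ) / (n + 1))) ≤ a n := by
  set b : ℝ := min (a 1) (a 2) with hbdef
  have hb1 : 1 < b := lt_min h1 h2
  have hb0 : 0 < b := lt_trans one_pos hb1
  -- key doubling estimate
  have key : ∀ k : ℕ, b ^ (2 ^ k) ≤ a (2 * k + 1) ∧ b ^ (2 ^ k) ≤ a (2 * k + 2) := by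
    intro k
    induction k with
    | zero =>
        simp only [pow_zero, pow_one]
        exact ⟨min_le_left _ _, min_le_right _ _⟩
    | succ k ih =>
        obtain ⟨ih1, ih2⟩ := ih
        have hp1 : 0 < a (2 * k + 1) := hpos _ (by omega)
        have hp2 : 0 < a (2 * k + 2) := hpos _ (by omega)
        have hbp : (0:ℝ) < b ^ (2 ^ k) := pow_pos hb0 _
        have h12 : a (2 * k + 1) ≤ a (2 * k + 2) := (hmono (2 * k + 1) (by omega)).le
        have h23 : a (2 * k + 2) ≤ a (2 * k + 3) := (hmono (2 * k + 2) (by omega)).le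
        have hr1 : a (2 * k + 2) * a (2 * k + 1) ≤ a (2 * k + 3) := hrec (2 * k + 1) (by omega)
        have hr2 : a (2 * k + 3) * a (2 * k + 2) ≤ a (2 * k + 4) := hrec (2 * k + 2) (by omega)
        have hsplit : b ^ (2 ^ (k + 1)) = b ^ (2 ^ k) * b ^ (2 ^ k) := by
          rw [← pow_add]; ring_nf
        constructor
        · show b ^ (2 ^ (k+1)) ≤ a (2 * (k+1) + 1)
          have : (2 * (k+1) + 1) = 2 * k + 3 := by ring
          rw [this, hsplit]
          calc b ^ (2 ^ k) * b ^ (2 ^ k) ≤ a (2 * k + 2) * a (2 * k + 1) :=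
                mul_le_mul ih2 ih1 hbp.le hp2.le
            _ ≤ a (2 * k + 3) := hr1
        · show b ^ (2 ^ (k+1)) ≤ a (2 * (k+1) + 2)
          have : (2 * (k+1) + 2) = 2 * k + 4 := by ring
          rw [this, hsplit]
          calc b ^ (2 ^ k) * b ^ (2 ^ k) ≤ a (2 * k + 3) * a (2 * k + 2) :=
                mul_le_mul (ih1.trans (h12.trans h23)) ih2 hbp.le (hp1.trans_le (h12.trans h23)).le
            _ ≤ a (2 * k + 4) := hr2
  have keyn : ∀ n : ℕ, 1 ≤ n → b ^ (2 ^ ((n - 1) / 2)) ≤ a n := by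
    intro n hn
    have h : n = 2 * ((n - 1) / 2) + 1 ∨ n = 2 * ((n - 1) / 2) + 2 := by omega
    rcases h with h | h
    · conv_rhs => rw [h]
      exact (key _).1
    · conv_rhs => rw [h]
      exact (key _).2
  constructor
  · -- Part 1
    apply tendsto_atTop_mono' atTop
        (f₁ := fun n : ℕ => b ^ (((((n - 3) / 2 : ℕ) : ℝ)) / 4))
    · -- eventual inequality
      filter_upwards [eventually_ge_atTop 11] with n hn
      set m : ℕ := (n - 3) / 2 with hmdef
      have hm4 : 4 ≤ m := by omega
      obtain ⟨k, rfl⟩ : ∃ k, n = k + 3 := ⟨n - 3, by omega⟩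
      have hkm : k / 2 = m := by omega
      have hn4 : k + 3 ≤ 4 * m := by omega
      have hsq : m ^ 2 ≤ 2 ^ m := aux_sq_le_two_pow m hm4
      have hp1 : 0 < a (k + 1) := hpos _ (by omega)
      have hp2 : 0 < a (k + 2) := hpos _ (by omega)
      have hstep : a (k + 1) ≤ a (k + 3) / a (k + 2) := by
        rw [le_div_iff₀ hp2]
        calc a (k + 1) * a (k + 2) = a (k + 2) * a (k + 1) := by ring
          _ ≤ a (k + 3) := hrec (k + 1) (by omega)
      have hlow : b ^ (2 ^ m) ≤ a (k + 1) := by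
        have := keyn (k + 1) (by omega)
        simpa [hkm] using this
      have hnpos : (0:ℝ) < ((k : ℝ) + 3) := by positivity
      -- exponent comparison
      have hexp : (m : ℝ) / 4 ≤ (2 ^ m : ℝ) / ((k : ℝ) + 3) := by
        rw [div_le_div_iff₀ (by norm_num) hnpos]
        have c1 : ((k : ℝ) + 3) ≤ 4 * m := by exact_mod_cast hn4
        have c2 : ((m : ℝ)) ^ 2 ≤ 2 ^ m := by exact_mod_cast hsq
        nlinarith [Nat.cast_nonneg (α := ℝ) m]
      have e1 : ((b ^ (2 ^ m) : ℝ)) ^ ((1 : ℝ) / ((k : ℝ) + 3))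
          = b ^ ((2 ^ m : ℝ) / ((k : ℝ) + 3)) := by
        rw [← Real.rpow_natCast b (2 ^ m), ← Real.rpow_mul hb0.le]
        push_cast
        ring_nf
      calc b ^ ((m : ℝ) / 4) ≤ b ^ ((2 ^ m : ℝ) / ((k : ℝ) + 3)) :=
            Real.rpow_le_rpow_of_exponent_le hb1.le hexp
        _ = (b ^ (2 ^ m) : ℝ) ^ ((1 : ℝ) / ((k : ℝ) + 3)) := e1.symm
        _ ≤ (a (k + 3) / a (k + 2)) ^ ((1 : ℝ) / ((k : ℝ) + 3)) := by
            apply Real.rpow_le_rpow (by positivity) (hlow.trans hstep) (by positivity)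
        _ = (a (k + 3) / a (k + 3 - 1)) ^ ((1 : ℝ) / ((k + 3 : ℕ) : ℝ)) := by
            norm_num
    · -- tendsto of comparison
      have h_natm : Tendsto (fun n : ℕ => (n - 3) / 2) atTop atTop := by
        rw [Filter.tendsto_atTop_atTop]
        intro c
        exact ⟨2 * c + 3, fun n hn => by omega⟩
      have hcast : Tendsto (fun n : ℕ => (((n - 3) / 2 : ℕ) : ℝ)) atTop atTop :=
        tendsto_natCast_atTop_atTop.comp h_natm
      have hdiv : Tendsto (fun n : ℕ => (((n - 3) / 2 : ℕ) : ℝ) / 4) atTop atTop :=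
        hcast.atTop_div_const (by norm_num)
      have hmul : Tendsto (fun n : ℕ => Real.log b * ((((n - 3) / 2 : ℕ) : ℝ) / 4)) atTop atTop :=
        hdiv.const_mul_atTop (Real.log_pos hb1)
      have := Real.tendsto_exp_atTop.comp hmul
      refine this.congr fun n => ?_
      simp [Real.rpow_def_of_pos hb0]
  · -- Part 2
    obtain ⟨K, hK2, hK1⟩ : ∃ K : ℕ, 2 ≤ b ^ K ∧ 1 ≤ K := by
      have := (tendsto_pow_atTop_atTop_of_one_lt hb1).eventually_ge_atTop 2
      obtain ⟨K, hK⟩ := (this.and (eventually_ge_atTop 1)).exists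
      exact ⟨K, hK.1, hK.2⟩
    refine ⟨16 * K + 1, fun n hn => ?_⟩
    set m : ℕ := (n - 1) / 2 with hmdef
    have hmK : 8 * K ≤ m := by omega
    have hn1 : 1 ≤ n := by omega
    have hnm : n ≤ 2 * m + 2 := by omega
    have hm8 : 8 ≤ m := by omega
    set M : ℝ := (n : ℝ) + 1 with hM
    have hMpos : (0:ℝ) < M := by positivity
    set ε : ℝ := (2 : ℝ) ^ (-(n + 1 : ℤ)) with he
    have hεeq : ε = ((2 : ℝ) ^ (n + 1))⁻¹ := by
      rw [he, zpow_neg]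
      norm_num
      rw [show ((n:ℤ)+1) = ((n+1 : ℕ) : ℤ) by push_cast; ring, zpow_natCast]
    have hεpos : 0 < ε := by rw [hεeq]; positivity
    have hεle : ε ≤ 1 / 4 := by
      rw [hεeq]
      rw [inv_le_comm₀ (by positivity) (by norm_num)]
      calc ((1:ℝ)/4)⁻¹ = 4 := by norm_num
        _ ≤ 2 ^ 2 := by norm_num
        _ ≤ 2 ^ (n + 1) := pow_le_pow_right₀ one_le_two (by omega)
    have hεM : ε / M ≤ 1 / 2 := by
      have : ε / M ≤ ε := by
        apply div_le_self hεpos.le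
        have : (0:ℝ) ≤ (n:ℝ) := Nat.cast_nonneg n
        rw [hM]; linarith
      linarith
    -- Bernoulli
    have hBern : 1 - ε ≤ (1 - ε / M) ^ (n + 1) := by
      have h2 : (-2 : ℝ) ≤ -(ε / M) := by linarith
      have := one_add_mul_le_pow h2 (n + 1)
      have heq : 1 + ((n : ℝ) + 1) * (-(ε / M)) = 1 - ε := by
        field_simp [hM]
        ring
      rw [← heq]
      calc 1 + ((n:ℝ)+1) * (-(ε / M)) = 1 + ((n+1 : ℕ) : ℝ) * (-(ε/M)) := by push_cast; ring
        _ ≤ (1 + -(ε / M)) ^ (n + 1) := this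
        _ = (1 - ε / M) ^ (n + 1) := by ring_nf
    have h1ε : (0:ℝ) ≤ 1 - ε := by linarith
    have h1εM : (0:ℝ) ≤ 1 - ε / M := by linarith
    have hroot : (1 - ε) ^ ((1:ℝ) / M) ≤ 1 - ε / M := by
      have h := Real.rpow_le_rpow h1ε hBern (by positivity : (0:ℝ) ≤ 1 / M)
      calc (1 - ε) ^ ((1:ℝ)/M) ≤ ((1 - ε / M) ^ (n+1)) ^ ((1:ℝ)/M) := h
        _ = (1 - ε / M) ^ (((n+1 : ℕ) : ℝ) * (1 / M)) := by
            rw [← Real.rpow_natCast (1 - ε/M) (n+1), ← Real.rpow_mul h1εM]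
        _ = (1 - ε / M) ^ (1:ℝ) := by
            congr 1
            push_cast [hM]
            field_simp
        _ = 1 - ε / M := Real.rpow_one _
    have hgap : ε / M ≤ 1 - (1 - ε) ^ ((1:ℝ) / M) := by linarith
    have hgap0 : 0 < ε / M := by positivity
    have hRHS : 1 / (1 - (1 - ε) ^ ((1:ℝ) / M)) ≤ M * 2 ^ (n + 1) := by
      calc 1 / (1 - (1 - ε) ^ ((1:ℝ) / M)) ≤ 1 / (ε / M) :=
            one_div_le_one_div_of_le hgap0 hgap
        _ = M / ε := by field_simp
        _ = M * 2 ^ (n + 1) := by rw [hεeq]; field_simp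
    -- now bound M * 2^(n+1) by a n
    have hsq : m ^ 2 ≤ 2 ^ m := aux_sq_le_two_pow m (by omega)
    have hdiv : 2 * n + 2 ≤ 2 ^ m / K := by
      rw [Nat.le_div_iff_mul_le (by omega)]
      calc (2 * n + 2) * K ≤ (4 * m + 6) * K := by nlinarith
        _ ≤ m ^ 2 := by nlinarith
        _ ≤ 2 ^ m := hsq
    have hchain : M * 2 ^ (n + 1) ≤ a n := by
      have c1 : M ≤ 2 ^ (n + 1) := by
        rw [hM]
        have : (n + 1 : ℕ) < 2 ^ (n + 1) := Nat.lt_two_pow_self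
        calc (n:ℝ) + 1 = ((n + 1 : ℕ) : ℝ) := by push_cast; ring
          _ ≤ ((2 ^ (n+1) : ℕ) : ℝ) := by exact_mod_cast this.le
          _ = 2 ^ (n + 1) := by push_cast; ring
      calc M * 2 ^ (n + 1) ≤ 2 ^ (n + 1) * 2 ^ (n + 1) := by
            apply mul_le_mul_of_nonneg_right c1 (by positivity)
        _ = 2 ^ (2 * n + 2) := by rw [← pow_add]; ring_nf
        _ ≤ 2 ^ (2 ^ m / K) := pow_le_pow_right₀ one_le_two hdiv
        _ ≤ (b ^ K) ^ (2 ^ m / K) := pow_le_pow_left₀ (by norm_num) hK2 _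
        _ = b ^ (K * (2 ^ m / K)) := by rw [← pow_mul]
        _ ≤ b ^ (2 ^ m) := pow_le_pow_right₀ hb1.le (by
              rw [mul_comm]; exact Nat.div_mul_le_self _ _)
        _ ≤ a n := keyn n hn1
    calc 1 / (1 - (1 - ε) ^ ((1:ℝ) / ((n:ℝ) + 1))) = 1 / (1 - (1 - ε) ^ ((1:ℝ) / M)) := by rw [hM]
      _ ≤ M * 2 ^ (n + 1) := hRHS
      _ ≤ a n := hchain
end
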